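/- (Local multiplier theorem) Let D be a regular (v,k,λ,μ)-PDS in a finite abelian group G, and assume Δ = (λ−μ)² + 4(k−μ) is a perfect square. Then for every g ∈ G and every integer s coprime with the order of g, one has g ∈ D if and only if g^s ∈ D. -/

import Mathlib

/-- The number of representations of `g` as `a * b⁻¹` with `a, b ∈ D`. -/
def diffReps {G : Type*} [Group G] [DecidableEq G] (D : Finset G) (g : G) : ℕ :=
  ((D ×ˢ D).filter (fun p => p.1 * p.2⁻¹ = g)).card

/-- `D` is a `(v, k, λ, μ)`-partial difference set in the finite group `G`. -/
def IsPDS {G : Type*} [Group G] [Fintype G] [DecidableEq G]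
    (D : Finset G) (v k l m : ℕ) : Prop :=
  Fintype.card G = v ∧ D.card = k ∧
  ∀ g : G, g ≠ 1 →
    (g ∈ D → diffReps D g = l) ∧ (g ∉ D → diffReps D g = m)

/-- `D` is regular: it does not contain the identity and is closed under inverses. -/
def IsRegularPDS {G : Type*} [Group G] (D : Finset G) : Prop :=
  (1 : G) ∉ D ∧ ∀ d : G, d ∈ D ↔ d⁻¹ ∈ D

/-- A regular PDS `D` is trivial if `D ∪ {e}` or `G \ D` is a subgroup of `G`. -/
def IsTrivialPDS {G : Type*} [Group G] (D : Finset G) : Prop :=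
  (∃ H : Subgroup G, (H : Set G) = insert (1 : G) ↑D) ∨
  (∃ H : Subgroup G, (H : Set G) = (↑D : Set G)ᶜ)

open Finset

set_option maxRecDepth 10000

namespace PDSAux

/-- Reduce an integer exponent coprime to the order of `g` to a natural exponent coprime
to the exponent of the whole group. -/
lemma exists_nat_exponent_coprime {G : Type*} [Group G] [Fintype G] (g : G) (s : ℤ)
    (hs : IsCoprime s (orderOf g : ℤ)) :
    ∃ t : ℕ, Nat.Coprime t (Monoid.exponent G) ∧ g ^ s = g ^ t := by
  set d := orderOf g with hd
  have hdpos : 0 < d := orderOf_pos g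
  have hnpos : 0 < Monoid.exponent G := Monoid.exponent_pos.mpr ⟨Fintype.card G,
    Fintype.card_pos, fun h => pow_card_eq_one⟩
  haveI : NeZero (Monoid.exponent G) := ⟨hnpos.ne'⟩
  set s' : ℕ := (s % (d : ℤ)).toNat with hs'def
  have hs'cast : (s' : ℤ) = s % (d : ℤ) :=
    Int.toNat_of_nonneg (Int.emod_nonneg s (by exact_mod_cast hdpos.ne'))
  have hmod : s ≡ (s' : ℤ) [ZMOD (d : ℤ)] := by
    unfold Int.ModEq
    rw [hs'cast, Int.emod_emod_of_dvd _ dvd_rfl]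
  have hcop' : IsCoprime ((s' : ℤ)) (d : ℤ) := by
    rw [hs'cast, Int.emod_def]
    have := hs.add_mul_left_left (-(s / (d : ℤ)))
    simpa [mul_comm, sub_eq_add_neg, mul_neg] using this
  have hncop : Nat.Coprime s' d := by
    have := Int.isCoprime_iff_gcd_eq_one.mp hcop'
    simpa [Int.gcd_natCast_natCast] using this
  -- lift to a unit mod the exponent
  have hdvd : d ∣ Monoid.exponent G := Monoid.order_dvd_exponent g
  obtain ⟨u, hu⟩ := ZMod.unitsMap_surjective hdvd (ZMod.unitOfCoprime s' hncop)
  refine ⟨(u : ZMod (Monoid.exponent G)).val, ZMod.val_coe_unit_coprime u, ?_⟩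
  have h1 : g ^ s = g ^ ((s' : ℕ) : ℤ) := zpow_eq_zpow_iff_modEq.mpr hmod
  rw [h1, zpow_natCast]
  -- now g ^ s' = g ^ t with t := val
  have h2 : ((u : ZMod (Monoid.exponent G)).val : ZMod d) = ((s' : ℕ) : ZMod d) := by
    have : ((ZMod.castHom hdvd (ZMod d)) (u : ZMod (Monoid.exponent G))) = ((s' : ℕ) : ZMod d) := by
      have := congrArg Units.val hu
      simpa [ZMod.unitsMap, ZMod.coe_unitOfCoprime] using this
    rw [← this]
    rw [ZMod.natCast_val]
    rfl
  have h3 : (u : ZMod (Monoid.exponent G)).val ≡ s' [MOD d] :=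
    (ZMod.natCast_eq_natCast_iff _ _ _).mp h2
  exact (pow_eq_pow_iff_modEq.mpr (hd ▸ h3)).symm

variable {G : Type*} [CommGroup G] [Fintype G] [DecidableEq G]
variable {K : Type*} [Field K]

lemma finite_char : Finite (G →* Kˣ) := by
  haveI : NeZero (Fintype.card G) := ⟨Fintype.card_ne_zero⟩
  let S := rootsOfUnity (Fintype.card G) K
  have fF : Finite (G →* S) := Finite.of_injective _ DFunLike.coe_injective
  refine Finite.of_surjective (fun f : G →* S => (Subgroup.subtype _).comp f) fun φ => ?_
  have H : ∀ a : G, φ a ∈ S := by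
    intro a
    simp only [S, mem_rootsOfUnity, ← map_pow, pow_card_eq_one, map_one]
  exact ⟨MonoidHom.codRestrict φ S H, MonoidHom.ext fun _ => rfl⟩

variable [HasEnoughRootsOfUnity K (Monoid.exponent G)] [Fintype (G →* Kˣ)]

lemma card_char : Fintype.card (G →* Kˣ) = Fintype.card G := by
  rw [← Nat.card_eq_fintype_card, ← Nat.card_eq_fintype_card]
  exact Nat.card_congr (CommGroup.monoidHom_mulEquiv_of_hasEnoughRootsOfUnity G K).some.toEquiv

/-- Second orthogonality relation. -/
lemma sum_char_apply (g : G) :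
    ∑ χ : G →* Kˣ, ((χ g : Kˣ) : K) = if g = 1 then (Fintype.card G : K) else 0 := by
  split_ifs with hg
  · subst hg
    have h1 : ∀ χ : G →* Kˣ, ((χ (1 : G) : Kˣ) : K) = 1 := fun χ => by
      rw [map_one, Units.val_one]
    rw [Finset.sum_congr rfl fun χ _ => h1 χ, Finset.sum_const, Finset.card_univ,
      card_char (G := G) (K := K), nsmul_eq_mul, mul_one]
  · obtain ⟨χ₀, hχ₀⟩ := CommGroup.exists_apply_ne_one_of_hasEnoughRootsOfUnity G K hg
    have h1 : ((χ₀ g : Kˣ) : K) ≠ 1 := fun h => hχ₀ (Units.val_eq_one.mp h)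
    refine eq_zero_of_mul_eq_self_left h1 ?_
    rw [Finset.mul_sum]
    have : ∀ χ : G →* Kˣ, ((χ₀ g : Kˣ) : K) * ((χ g : Kˣ) : K) = (((χ₀ * χ) g : Kˣ) : K) := by
      intro χ; simp
    simp_rw [this]
    exact Fintype.sum_bijective _ (Group.mulLeft_bijective χ₀) _ _ fun χ => rfl

/-- First orthogonality relation. -/
lemma sum_apply_char {χ : G →* Kˣ} (hχ : χ ≠ 1) :
    ∑ g : G, ((χ g : Kˣ) : K) = 0 := by
  have : ∃ a : G, χ a ≠ 1 := by
    by_contra h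
    push_neg at h
    exact hχ (MonoidHom.ext fun a => h a)
  obtain ⟨a, ha⟩ := this
  have h1 : ((χ a : Kˣ) : K) ≠ 1 := fun h => ha (Units.val_eq_one.mp h)
  refine eq_zero_of_mul_eq_self_left h1 ?_
  rw [Finset.mul_sum]
  have : ∀ g : G, ((χ a : Kˣ) : K) * ((χ g : Kˣ) : K) = ((χ (a * g) : Kˣ) : K) := by
    intro g; simp
  simp_rw [this]
  exact Fintype.sum_bijective _ (Group.mulLeft_bijective a) _ _ fun g => rfl

/-- Fourier inversion for the indicator of `D`. -/
lemma inversion (D : Finset G) (x : G) :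
    ∑ χ : G →* Kˣ, (∑ d ∈ D, ((χ d : Kˣ) : K)) * ((χ x⁻¹ : Kˣ) : K)
      = if x ∈ D then (Fintype.card G : K) else 0 := by
  have step : ∀ χ : G →* Kˣ, (∑ d ∈ D, ((χ d : Kˣ) : K)) * ((χ x⁻¹ : Kˣ) : K)
      = ∑ d ∈ D, ((χ (d * x⁻¹) : Kˣ) : K) := by
    intro χ
    rw [Finset.sum_mul]
    exact Finset.sum_congr rfl fun d _ => by simp
  simp_rw [step]
  rw [Finset.sum_comm]
  have : ∀ d : G, ∑ χ : G →* Kˣ, ((χ (d * x⁻¹) : Kˣ) : K)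
      = if d = x then (Fintype.card G : K) else 0 := by
    intro d
    rw [sum_char_apply (d * x⁻¹)]
    simp [mul_inv_eq_one]
  simp_rw [this]
  rw [Finset.sum_ite_eq' D x (fun _ => (Fintype.card G : K))]

lemma diffReps_one (D : Finset G) (h1 : (1 : G) ∉ D) : diffReps D 1 = D.card := by
  unfold diffReps
  have himg : ((D ×ˢ D).filter fun p => p.1 * p.2⁻¹ = 1) = D.image fun d => (d, d) := by
    ext ⟨a, b⟩
    simp only [Finset.mem_filter, Finset.mem_product, Finset.mem_image, mul_inv_eq_one,
      Prod.mk.injEq]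
    constructor
    · rintro ⟨⟨ha, hb⟩, rfl⟩
      exact ⟨a, ha, rfl, rfl⟩
    · rintro ⟨d, hd, rfl, rfl⟩
      exact ⟨⟨hd, hd⟩, rfl⟩
  rw [himg, Finset.card_image_of_injective _ (fun x y hxy => (Prod.mk.injEq _ _ _ _ ▸ hxy).1)]

/-- The character sum over `D` satisfies the standard quadratic relation. -/
lemma charSum_sq {D : Finset G} {v k l m : ℕ} (hD : IsPDS D v k l m)
    (hreg : IsRegularPDS D) {χ : G →* Kˣ} (hχ : χ ≠ 1) :
    (∑ d ∈ D, ((χ d : Kˣ) : K)) ^ 2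
      = ((k : K) - m) + ((l : K) - m) * ∑ d ∈ D, ((χ d : Kˣ) : K) := by
  set S : K := ∑ d ∈ D, ((χ d : Kˣ) : K) with hS
  have h1D : (1 : G) ∉ D := hreg.1
  -- the sum of χ over D⁻¹ = D equals S
  have hinv : ∑ d ∈ D, ((χ d⁻¹ : Kˣ) : K) = S := by
    have himg : D.image (fun d => d⁻¹) = D := by
      ext x
      simp only [Finset.mem_image]
      constructor
      · rintro ⟨y, hy, rfl⟩; exact (hreg.2 y).mp hy
      · intro hx; exact ⟨x⁻¹, (hreg.2 x).mp hx, inv_inv x⟩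
    calc ∑ d ∈ D, ((χ d⁻¹ : Kˣ) : K)
        = ∑ d ∈ D.image (fun d => d⁻¹), ((χ d : Kˣ) : K) := by
          rw [Finset.sum_image (fun x _ y _ h => inv_injective h)]
      _ = S := by rw [himg]
  -- S^2 as a sum over D × D
  have hprod : S ^ 2 = ∑ p ∈ D ×ˢ D, ((χ (p.1 * p.2⁻¹) : Kˣ) : K) := by
    have e : S ^ 2 = (∑ a ∈ D, ((χ a : Kˣ) : K)) * ∑ b ∈ D, ((χ b⁻¹ : Kˣ) : K) := by
      rw [hinv, ← hS, sq]
    rw [e, Finset.sum_mul_sum, Finset.sum_product]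
    exact Finset.sum_congr rfl fun a _ => Finset.sum_congr rfl fun b _ => by simp
  -- fiberwise
  have hfib : S ^ 2 = ∑ g : G, (diffReps D g : K) * ((χ g : Kˣ) : K) := by
    rw [hprod, ← Finset.sum_fiberwise_of_maps_to (g := fun p : G × G => p.1 * p.2⁻¹)
      (t := Finset.univ) (fun p _ => Finset.mem_univ _)]
    refine Finset.sum_congr rfl fun g _ => ?_
    have : ∀ p ∈ (D ×ˢ D).filter (fun p : G × G => p.1 * p.2⁻¹ = g),
        ((χ (p.1 * p.2⁻¹) : Kˣ) : K) = ((χ g : Kˣ) : K) := by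
      intro p hp
      rw [(Finset.mem_filter.mp hp).2]
    rw [Finset.sum_congr rfl this, Finset.sum_const, nsmul_eq_mul]
    rfl
  -- split the sum over G into {1}, D, and the rest
  have hsub : D ⊆ Finset.univ \ {1} := fun x hx => Finset.mem_sdiff.mpr
    ⟨Finset.mem_univ _, by
      simp only [Finset.mem_singleton]
      rintro rfl
      exact h1D hx⟩
  set f : G → K := fun g => (diffReps D g : K) * ((χ g : Kˣ) : K) with hf
  have hsplit1 : ∑ g : G, f g = f 1 + ∑ g ∈ Finset.univ \ {1}, f g := by
    rw [← Finset.sum_eq_add_sum_sdiff_singleton_of_mem (Finset.mem_univ (1 : G)) f]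
  have hsplit2 : ∑ g ∈ Finset.univ \ {1}, f g
      = ∑ g ∈ (Finset.univ \ {1}) \ D, f g + ∑ g ∈ D, f g :=
    (Finset.sum_sdiff hsub).symm
  -- evaluate each part
  have hone : f 1 = (k : K) := by
    simp only [hf, map_one, Units.val_one, mul_one]
    rw [diffReps_one D h1D, hD.2.1]
  have hDpart : ∑ g ∈ D, f g = (l : K) * S := by
    rw [hS, Finset.mul_sum]
    refine Finset.sum_congr rfl fun g hg => ?_
    have hg1 : g ≠ 1 := fun h => h1D (h ▸ hg)
    simp only [hf]
    rw [(hD.2.2 g hg1).1 hg]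
  have hchi1 : ((χ (1 : G) : Kˣ) : K) = 1 := by rw [map_one, Units.val_one]
  have hsum0 : ∑ g : G, ((χ g : Kˣ) : K) = 0 := sum_apply_char hχ
  have hcompl : ∑ g ∈ (Finset.univ \ {1}) \ D, ((χ g : Kˣ) : K) = -1 - S := by
    have e1 : ∑ g : G, ((χ g : Kˣ) : K)
        = ((χ (1:G) : Kˣ) : K) + ∑ g ∈ Finset.univ \ {1}, ((χ g : Kˣ) : K) :=
      Finset.sum_eq_add_sum_sdiff_singleton_of_mem (Finset.mem_univ (1 : G)) _
    have e2 : ∑ g ∈ Finset.univ \ {1}, ((χ g : Kˣ) : K)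
        = ∑ g ∈ (Finset.univ \ {1}) \ D, ((χ g : Kˣ) : K) + S := by
      rw [hS]
      exact (Finset.sum_sdiff hsub).symm
    rw [e1, hchi1, e2] at hsum0
    linear_combination hsum0
  have hMpart : ∑ g ∈ (Finset.univ \ {1}) \ D, f g = (m : K) * (-1 - S) := by
    rw [← hcompl, Finset.mul_sum]
    refine Finset.sum_congr rfl fun g hg => ?_
    obtain ⟨hg1', hgD⟩ := Finset.mem_sdiff.mp hg
    have hg1 : g ≠ 1 := by
      have := (Finset.mem_sdiff.mp hg1').2
      simpa using this
    simp only [hf]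
    rw [(hD.2.2 g hg1).2 hgD]
  rw [hfib, hsplit1, hsplit2, hone, hDpart, hMpart]
  ring

/-- Because `Δ` is a perfect square, every character sum is an integer. -/
lemma charSum_int {D : Finset G} {v k l m : ℕ} (hD : IsPDS D v k l m)
    (hreg : IsRegularPDS D)
    (hsq : IsSquare (((l : ℤ) - m) ^ 2 + 4 * ((k : ℤ) - m))) (χ : G →* Kˣ) :
    ∃ z : ℤ, ∑ d ∈ D, ((χ d : Kˣ) : K) = (z : K) := by
  by_cases hχ : χ = 1
  · refine ⟨(k : ℤ), ?_⟩
    subst hχ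
    have : ∀ d ∈ D, (((1 : G →* Kˣ) d : Kˣ) : K) = 1 := fun d _ => by
      rw [MonoidHom.one_apply, Units.val_one]
    rw [Finset.sum_congr rfl this, Finset.sum_const, nsmul_eq_mul, mul_one, hD.2.1]
    norm_num
  · obtain ⟨u, hu⟩ := hsq
    set a : ℤ := (l : ℤ) - m with ha
    set b : ℤ := (k : ℤ) - m with hb
    have hu' : a ^ 2 + 4 * b = u * u := hu
    -- parity: u + a is even
    have heven : Even (u + a) := by
      have h1 : Even (u * u) ↔ Even u := by
        constructor
        · intro h
          rcases Int.even_mul.mp h with h' | h' <;> exact h'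
        · intro h; exact h.mul_right u
      have h2 : Even (a ^ 2) ↔ Even a := by
        rw [sq]
        constructor
        · intro h
          rcases Int.even_mul.mp h with h' | h' <;> exact h'
        · intro h; exact h.mul_right a
      have h3 : Even (a ^ 2 + 4 * b) ↔ Even (a ^ 2) := by
        have h4 : Even (4 * b) := ⟨2 * b, by ring⟩
        constructor
        · intro h
          have := Int.even_add.mp h
          exact this.mpr h4
        · intro h
          exact Int.even_add.mpr (iff_of_true h h4)
      rw [Int.even_add]
      rw [← hu'] at h1
      rw [h3] at h1
      rw [h2] at h1
      exact h1.symm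
    obtain ⟨c, hc⟩ := heven
    have hcu : u = c + c - a := by linarith
    rw [hcu] at hu'
    have hkey : c * (a - c) = -b := by
      have h4 : 4 * (c * (a - c)) = 4 * (-b) := by linear_combination hu'
      exact mul_left_cancel₀ (by norm_num : (4 : ℤ) ≠ 0) h4
    -- in K
    set S : K := ∑ d ∈ D, ((χ d : Kˣ) : K) with hS
    have hq : S ^ 2 = ((k : K) - m) + ((l : K) - m) * S := charSum_sq hD hreg hχ
    have hfac : (S - (c : K)) * (S - ((a - c : ℤ) : K)) = 0 := by
      have hkeyK : (c : K) * (((a : ℤ) : K) - (c : K)) = -(((b : ℤ) : K)) := by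
        exact_mod_cast congrArg (fun z : ℤ => (z : K)) hkey
      have haK : ((a : ℤ) : K) = (l : K) - m := by push_cast [ha]; ring
      have hbK : ((b : ℤ) : K) = (k : K) - m := by push_cast [hb]; ring
      push_cast
      rw [haK] at hkeyK ⊢
      rw [hbK] at hkeyK
      linear_combination hq + hkeyK
    rcases mul_eq_zero.mp hfac with h | h
    · exact ⟨c, sub_eq_zero.mp h⟩
    · exact ⟨a - c, sub_eq_zero.mp h⟩

end PDSAux

/-- The local multiplier theorem: if `D` is a regular `(v,k,λ,μ)`-PDS in a finite
abelian group and `Δ = (λ-μ)² + 4(k-μ)` is a perfect square, then `g ∈ D` iff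
`g^s ∈ D` for every integer `s` coprime with the order of `g`. -/
theorem local_multiplier_theorem (G : Type*) [CommGroup G] [Fintype G] [DecidableEq G]
    (D : Finset G) (v k l m : ℕ) (hD : IsPDS D v k l m) (hreg : IsRegularPDS D)
    (hsq : IsSquare (((l : ℤ) - m) ^ 2 + 4 * ((k : ℤ) - m))) :
    ∀ (g : G) (s : ℤ), IsCoprime s (orderOf g : ℤ) → (g ∈ D ↔ g ^ s ∈ D) := by
  intro g s hs
  obtain ⟨t, htcop, hgt⟩ := PDSAux.exists_nat_exponent_coprime g s hs
  rw [hgt]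
  have hnpos : 0 < Monoid.exponent G := Monoid.exponent_pos.mpr ⟨Fintype.card G,
    Fintype.card_pos, fun h => pow_card_eq_one⟩
  haveI : NeZero (Monoid.exponent G) := ⟨hnpos.ne'⟩
  set N : ℕ+ := ⟨Monoid.exponent G, hnpos⟩ with hN
  let K := CyclotomicField N ℚ
  haveI : NeZero (((N : ℕ)) : ℚ) := ⟨Nat.cast_ne_zero.mpr N.ne_zero⟩
  haveI : IsCyclotomicExtension {(N : ℕ)} ℚ K := by
    exact CyclotomicField.isCyclotomicExtension (N : ℕ) ℚ
  haveI hEnough : HasEnoughRootsOfUnity K (Monoid.exponent G) :=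
    ⟨⟨IsCyclotomicExtension.zeta N ℚ K, IsCyclotomicExtension.zeta_spec N ℚ K⟩,
      rootsOfUnity.isCyclic K (Monoid.exponent G)⟩
  haveI : Finite (G →* Kˣ) := PDSAux.finite_char
  haveI : Fintype (G →* Kˣ) := Fintype.ofFinite _
  have hirr : Irreducible (Polynomial.cyclotomic (N : ℕ) ℚ) :=
    Polynomial.cyclotomic.irreducible_rat N.pos
  have hζ := IsCyclotomicExtension.zeta_spec N ℚ K
  have hμ : IsPrimitiveRoot ((IsCyclotomicExtension.zeta N ℚ K) ^ t) (N : ℕ) :=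
    hζ.pow_of_coprime t htcop
  set σ : K ≃ₐ[ℚ] K := IsCyclotomicExtension.fromZetaAut hμ hirr with hσdef
  have hσζ : σ (IsCyclotomicExtension.zeta N ℚ K) = (IsCyclotomicExtension.zeta N ℚ K) ^ t :=
    IsCyclotomicExtension.fromZetaAut_spec hμ hirr
  have hσ : ∀ ξ : K, ξ ^ (Monoid.exponent G) = 1 → σ ξ = ξ ^ t := by
    intro ξ hξ
    obtain ⟨i, -, hi⟩ := hζ.eq_pow_of_pow_eq_one hξ
    rw [← hi, map_pow, hσζ, ← pow_mul, ← pow_mul, Nat.mul_comm]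
  have hroot : ∀ (χ : G →* Kˣ) (x : G), ((χ x : Kˣ) : K) ^ (Monoid.exponent G) = 1 := by
    intro χ x
    rw [← Units.val_pow_eq_pow_val, ← map_pow, Monoid.pow_exponent_eq_one, map_one, Units.val_one]
  have hint := fun χ : G →* Kˣ => PDSAux.charSum_int (K := K) hD hreg hsq χ
  have hchi_t : ∀ (χ : G →* Kˣ) (x : G), σ ((χ x⁻¹ : Kˣ) : K) = ((χ (x ^ t)⁻¹ : Kˣ) : K) := by
    intro χ x
    rw [hσ _ (hroot χ x⁻¹), ← Units.val_pow_eq_pow_val, ← map_pow, ← inv_pow]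
  have key : (if g ^ t ∈ D then ((Fintype.card G : K)) else 0)
      = (if g ∈ D then ((Fintype.card G : K)) else 0) := by
    calc (if g ^ t ∈ D then ((Fintype.card G : K)) else 0)
        = ∑ χ : G →* Kˣ, (∑ d ∈ D, ((χ d : Kˣ) : K)) * ((χ (g ^ t)⁻¹ : Kˣ) : K) :=
          (PDSAux.inversion (K := K) D (g ^ t)).symm
      _ = ∑ χ : G →* Kˣ, σ ((∑ d ∈ D, ((χ d : Kˣ) : K)) * ((χ g⁻¹ : Kˣ) : K)) := by
          refine Finset.sum_congr rfl fun χ _ => ?_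
          obtain ⟨z, hz⟩ := hint χ
          rw [map_mul, hz, map_intCast, hchi_t χ g, ← hz]
      _ = σ (∑ χ : G →* Kˣ, (∑ d ∈ D, ((χ d : Kˣ) : K)) * ((χ g⁻¹ : Kˣ) : K)) :=
          (map_sum σ _ _).symm
      _ = σ (if g ∈ D then ((Fintype.card G : K)) else 0) := by
          rw [PDSAux.inversion (K := K) D g]
      _ = (if g ∈ D then ((Fintype.card G : K)) else 0) := by
          split_ifs
          · rw [map_natCast]
          · rw [map_zero]
  have hcard : (Fintype.card G : K) ≠ 0 := Nat.cast_ne_zero.mpr Fintype.card_ne_zero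
  constructor
  · intro h
    by_contra h2
    rw [if_neg h2, if_pos h] at key
    exact hcard key.symm
  · intro h
    by_contra h2
    rw [if_pos h, if_neg h2] at key
    exact hcard key
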